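/- Let λ > 0 and let Y ∈ ℝ^{m×n} have a singular value decomposition Y = U Σ V⊤ with Σ = diag(σ₁, …, σ_r), σ₁ ≥ ⋯ ≥ σ_r > 0, of rank r. Then the proximal operator of the nuclear norm, prox_{λ‖·‖_*}(Y) := argmin_{X ∈ ℝ^{m×n}} { (1/2)‖X − Y‖_F² + λ‖X‖_* }, is given by singular value soft-thresholding: prox_{λ‖·‖_*}(Y) = U diag((σ_i − λ)_+) V⊤, where (t)_+ := max{t, 0}. -/

import Mathlib

open Matrix

/-- The nuclear norm of a real matrix: the sum of its singular values. -/
noncomputable def nuclearNorm {p m : Type*} [Fintype p] [Fintype m] [DecidableEq m]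
    (A : Matrix p m ℝ) : ℝ :=
  ∑ i, Real.sqrt ((show (Aᵀ * A).IsHermitian by
    simpa using Matrix.isHermitian_conjTranspose_mul_self A).eigenvalues i)

/-- The Frobenius norm of a real matrix. -/
noncomputable def frobNorm {p m : Type*} [Fintype p] [Fintype m]
    (A : Matrix p m ℝ) : ℝ :=
  Real.sqrt (∑ i, ∑ j, (A i j) ^ 2)

theorem Matrix.isHermitian_transpose_mul_self {p m : Type*} [Fintype p] [Fintype m]
    (A : Matrix p m ℝ) : (Aᵀ * A).IsHermitian := by
  simpa using Matrix.isHermitian_conjTranspose_mul_self A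
open Matrix Finset

section DotAux

variable {κ ι : Type*} [Fintype κ]

lemma dot_self_nonneg' (v : κ → ℝ) : 0 ≤ v ⬝ᵥ v :=
  Finset.sum_nonneg fun _ _ => mul_self_nonneg _

lemma dot_sum (T : Finset ι) (a : κ → ℝ) (f : ι → κ → ℝ) :
    a ⬝ᵥ (∑ i ∈ T, f i) = ∑ i ∈ T, a ⬝ᵥ f i := by
  simp only [dotProduct, Finset.sum_apply, Finset.mul_sum]
  exact Finset.sum_comm

lemma sum_dot (T : Finset ι) (a : κ → ℝ) (f : ι → κ → ℝ) :
    (∑ i ∈ T, f i) ⬝ᵥ a = ∑ i ∈ T, f i ⬝ᵥ a := by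
  simp only [dotProduct, Finset.sum_apply, Finset.sum_mul]
  exact Finset.sum_comm

lemma dot_mulVec_left {p : Type*} [Fintype p] (X : Matrix p κ ℝ) (a : p → ℝ) (b : κ → ℝ) :
    a ⬝ᵥ (X *ᵥ b) = (Xᵀ *ᵥ a) ⬝ᵥ b := by
  rw [dotProduct_mulVec, ← vecMul_transpose Xᵀ a, transpose_transpose]

lemma mulVec_dot {p : Type*} [Fintype p] (X : Matrix p κ ℝ) (a b : κ → ℝ) :
    (X *ᵥ a) ⬝ᵥ (X *ᵥ b) = a ⬝ᵥ ((Xᵀ * X) *ᵥ b) := by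
  conv_rhs => rw [← mulVec_mulVec, dot_mulVec_left, transpose_transpose]

lemma bessel [DecidableEq ι] (T : Finset ι) (u : ι → κ → ℝ)
    (hortho : ∀ i ∈ T, ∀ j ∈ T, u i ⬝ᵥ u j = if i = j then 1 else 0)
    (a : κ → ℝ) : ∑ i ∈ T, (a ⬝ᵥ u i) ^ 2 ≤ a ⬝ᵥ a := by
  set t : ι → ℝ := fun i => a ⬝ᵥ u i with ht
  have h0 : 0 ≤ (a - ∑ i ∈ T, t i • u i) ⬝ᵥ (a - ∑ i ∈ T, t i • u i) := dot_self_nonneg' _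
  have hav : a ⬝ᵥ (∑ i ∈ T, t i • u i) = ∑ i ∈ T, t i ^ 2 := by
    rw [dot_sum]
    refine Finset.sum_congr rfl fun i hi => ?_
    rw [dotProduct_smul]
    simp [ht, pow_two]
  have hvv : (∑ i ∈ T, t i • u i) ⬝ᵥ (∑ i ∈ T, t i • u i) = ∑ i ∈ T, t i ^ 2 := by
    rw [sum_dot]
    have key : ∀ i ∈ T, (t i • u i) ⬝ᵥ (∑ j ∈ T, t j • u j) = t i ^ 2 := by
      intro i hi
      rw [dot_sum]
      have h2 : ∀ j ∈ T, (t i • u i) ⬝ᵥ (t j • u j) = if i = j then t i ^ 2 else 0 := by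
        intro j hj
        rw [smul_dotProduct, dotProduct_smul, hortho i hi j hj]
        by_cases h : i = j
        · subst h; simp [pow_two]
        · simp [h]
      rw [Finset.sum_congr rfl h2, Finset.sum_ite_eq]
      simp [hi]
    rw [Finset.sum_congr rfl key]
  have hva : (∑ i ∈ T, t i • u i) ⬝ᵥ a = ∑ i ∈ T, t i ^ 2 := by
    rw [dotProduct_comm]; exact hav
  rw [sub_dotProduct, dotProduct_sub, dotProduct_sub, hav, hvv, hva] at h0
  linarith

end DotAux

section Spectral

variable {p m : Type*} [Fintype p] [Fintype m] [DecidableEq m]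

lemma spectral_setup (X : Matrix p m ℝ) :
    ∃ q : m → (m → ℝ),
      (∀ i j, q i ⬝ᵥ q j = if i = j then 1 else 0) ∧
      (∀ i j, (X *ᵥ q i) ⬝ᵥ (X *ᵥ q j) =
        if i = j then (isHermitian_transpose_mul_self X).eigenvalues i else 0) ∧
      (∀ G : Matrix p m ℝ, trace (Gᵀ * X) = ∑ i, (G *ᵥ q i) ⬝ᵥ (X *ᵥ q i)) := by
  classical
  have hH : (Xᵀ * X).IsHermitian := isHermitian_transpose_mul_self X
  set Q : Matrix m m ℝ := (hH.eigenvectorUnitary : Matrix m m ℝ) with hQdef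
  have hQmem := hH.eigenvectorUnitary.2
  have hstar : star Q = Qᵀ := conjTranspose_eq_transpose_of_trivial Q
  have hQ1 : Qᵀ * Q = 1 := by
    rw [← hstar]; exact (Matrix.mem_unitaryGroup_iff').mp hQmem
  have hQ2 : Q * Qᵀ = 1 := by
    rw [← hstar]; exact (Matrix.mem_unitaryGroup_iff).mp hQmem
  refine ⟨fun i k => Q k i, ?_, ?_, ?_⟩
  · intro i j
    have : (fun k => Q k i) ⬝ᵥ (fun k => Q k j) = (Qᵀ * Q) i j := by
      simp [mul_apply, dotProduct, transpose_apply]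
    rw [this, hQ1]
    by_cases h : i = j <;> simp [h, one_apply]
  · intro i j
    have hq : (fun k => Q k j) = ⇑(hH.eigenvectorBasis j) := by
      funext k; exact hH.eigenvectorUnitary_apply k j
    have heig : (Xᵀ * X) *ᵥ (fun k => Q k j) = hH.eigenvalues j • (fun k => Q k j) := by
      rw [hq]; exact hH.mulVec_eigenvectorBasis j
    rw [mulVec_dot, heig, dotProduct_smul]
    have : (fun k => Q k i) ⬝ᵥ (fun k => Q k j) = (Qᵀ * Q) i j := by
      simp [mul_apply, dotProduct, transpose_apply]
    rw [smul_eq_mul, this, hQ1]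
    by_cases h : i = j <;> simp [h, one_apply]
  · intro G
    have hcol : ∀ (A : Matrix p m ℝ) (i : m), (A *ᵥ fun k => Q k i) = fun k => (A * Q) k i := by
      intro A i; funext k; simp [mulVec, mul_apply, dotProduct]
    have h1 : ∑ i, (G *ᵥ fun k => Q k i) ⬝ᵥ (X *ᵥ fun k => Q k i)
        = trace ((G * Q)ᵀ * (X * Q)) := by
      rw [trace]
      refine Finset.sum_congr rfl fun i _ => ?_
      rw [hcol G i, hcol X i]
      simp [mul_apply, dotProduct, transpose_apply, mul_comm]
    rw [h1, transpose_mul, Matrix.mul_assoc]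
    conv_rhs => rw [trace_mul_comm, Matrix.mul_assoc Gᵀ (X * Q) Qᵀ, Matrix.mul_assoc X Q Qᵀ,
      hQ2, Matrix.mul_one]

end Spectral

section Key

variable {p m : Type*} [Fintype p] [Fintype m] [DecidableEq m]

lemma trace_le_nuclearNorm' (X G : Matrix p m ℝ)
    (hG : ∀ x : m → ℝ, (G *ᵥ x) ⬝ᵥ (G *ᵥ x) ≤ x ⬝ᵥ x) :
    trace (Gᵀ * X) ≤ ∑ i, Real.sqrt ((isHermitian_transpose_mul_self X).eigenvalues i) := by
  obtain ⟨q, hq, hXq, htr⟩ := spectral_setup X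
  rw [htr G]
  refine Finset.sum_le_sum fun i _ => ?_
  have hμ : (X *ᵥ q i) ⬝ᵥ (X *ᵥ q i) = (isHermitian_transpose_mul_self X).eigenvalues i := by
    simpa using hXq i i
  have hcs : (G *ᵥ q i) ⬝ᵥ (X *ᵥ q i) ≤
      Real.sqrt ((G *ᵥ q i) ⬝ᵥ (G *ᵥ q i)) * Real.sqrt ((X *ᵥ q i) ⬝ᵥ (X *ᵥ q i)) := by
    have := Real.sum_mul_le_sqrt_mul_sqrt Finset.univ (G *ᵥ q i) (X *ᵥ q i)
    simpa [dotProduct, pow_two] using this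
  have hG1 : (G *ᵥ q i) ⬝ᵥ (G *ᵥ q i) ≤ 1 := by
    have := hG (q i)
    have hqq : q i ⬝ᵥ q i = 1 := by simpa using hq i i
    linarith [this, hqq.le]
  calc (G *ᵥ q i) ⬝ᵥ (X *ᵥ q i)
      ≤ Real.sqrt ((G *ᵥ q i) ⬝ᵥ (G *ᵥ q i)) * Real.sqrt ((X *ᵥ q i) ⬝ᵥ (X *ᵥ q i)) := hcs
    _ ≤ 1 * Real.sqrt ((isHermitian_transpose_mul_self X).eigenvalues i) := by
        rw [hμ]
        gcongr
        calc Real.sqrt ((G *ᵥ q i) ⬝ᵥ (G *ᵥ q i)) ≤ Real.sqrt 1 := Real.sqrt_le_sqrt hG1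
          _ = 1 := Real.sqrt_one
    _ = _ := one_mul _

end Key

section Struct

variable {p n r : Type*} [Fintype p] [Fintype n] [Fintype r] [DecidableEq r] [DecidableEq n]

lemma contraction (U : Matrix p r ℝ) (V : Matrix n r ℝ) (d : r → ℝ)
    (hU : Uᵀ * U = 1) (hV : Vᵀ * V = 1) (hd0 : ∀ j, 0 ≤ d j) (hd1 : ∀ j, d j ≤ 1)
    (x : n → ℝ) :
    ((U * diagonal d * Vᵀ) *ᵥ x) ⬝ᵥ ((U * diagonal d * Vᵀ) *ᵥ x) ≤ x ⬝ᵥ x := by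
  have hGx : (U * diagonal d * Vᵀ) *ᵥ x = U *ᵥ (diagonal d *ᵥ (Vᵀ *ᵥ x)) := by
    rw [mulVec_mulVec, mulVec_mulVec]
  rw [hGx]
  set z := Vᵀ *ᵥ x with hz
  set w := diagonal d *ᵥ z with hw
  have hUw : (U *ᵥ w) ⬝ᵥ (U *ᵥ w) = w ⬝ᵥ w := by
    rw [mulVec_dot, hU, one_mulVec]
  have hwz : w ⬝ᵥ w ≤ z ⬝ᵥ z := by
    rw [hw]
    refine Finset.sum_le_sum fun j _ => ?_
    simp only [mulVec_diagonal]
    have hdd : d j * d j ≤ 1 := mul_le_one₀ (hd1 j) (hd0 j) (hd1 j)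
    nlinarith [hdd, mul_self_nonneg (z j)]
  have hzx : z ⬝ᵥ z ≤ x ⬝ᵥ x := by
    have h0 : 0 ≤ (x - V *ᵥ z) ⬝ᵥ (x - V *ᵥ z) := dot_self_nonneg' _
    have h1 : x ⬝ᵥ (V *ᵥ z) = z ⬝ᵥ z := by
      rw [dot_mulVec_left, hz]
    have h2 : (V *ᵥ z) ⬝ᵥ (V *ᵥ z) = z ⬝ᵥ z := by
      rw [mulVec_dot, hV, one_mulVec]
    have h3 : (V *ᵥ z) ⬝ᵥ x = z ⬝ᵥ z := by rw [dotProduct_comm]; exact h1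
    rw [sub_dotProduct, dotProduct_sub, dotProduct_sub, h1, h2, h3] at h0
    linarith
  calc (U *ᵥ w) ⬝ᵥ (U *ᵥ w) = w ⬝ᵥ w := hUw
    _ ≤ z ⬝ᵥ z := hwz
    _ ≤ x ⬝ᵥ x := hzx

lemma trace_UdVt (U : Matrix p r ℝ) (V : Matrix n r ℝ) (d s : r → ℝ)
    (hU : Uᵀ * U = 1) (hV : Vᵀ * V = 1) :
    trace ((U * diagonal d * Vᵀ)ᵀ * (U * diagonal s * Vᵀ)) = ∑ j, d j * s j := by
  have h1 : (U * diagonal d * Vᵀ)ᵀ = V * diagonal d * Uᵀ := by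
    rw [transpose_mul, transpose_mul, transpose_transpose, diagonal_transpose, Matrix.mul_assoc]
  rw [h1]
  have h2 : V * diagonal d * Uᵀ * (U * diagonal s * Vᵀ) = V * diagonal (fun j => d j * s j) * Vᵀ := by
    have : Uᵀ * (U * diagonal s * Vᵀ) = diagonal s * Vᵀ := by
      rw [← Matrix.mul_assoc, ← Matrix.mul_assoc, hU, Matrix.one_mul]
    rw [Matrix.mul_assoc (V * diagonal d) Uᵀ _, this, ← Matrix.mul_assoc,
      Matrix.mul_assoc V (diagonal d) (diagonal s), diagonal_mul_diagonal]
  rw [h2, trace_mul_cycle, hV, Matrix.one_mul, trace_diagonal]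

end Struct

section Upper

variable {p n r : Type*} [Fintype p] [Fintype n] [Fintype r] [DecidableEq r] [DecidableEq n]

lemma nuclearNorm_UdVt_le (U : Matrix p r ℝ) (V : Matrix n r ℝ) (s : r → ℝ)
    (hU : Uᵀ * U = 1) (hV : Vᵀ * V = 1) (hs : ∀ j, 0 ≤ s j) :
    ∑ i, Real.sqrt ((isHermitian_transpose_mul_self (U * diagonal s * Vᵀ)).eigenvalues i)
      ≤ ∑ j, s j := by
  classical
  set W := U * diagonal s * Vᵀ with hW
  obtain ⟨q, hq, hWq, _⟩ := spectral_setup W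
  set μ := (isHermitian_transpose_mul_self W).eigenvalues with hμ
  have hμself : ∀ i, (W *ᵥ q i) ⬝ᵥ (W *ᵥ q i) = μ i := fun i => by simpa using hWq i i
  have hμ0 : ∀ i, 0 ≤ μ i := fun i => (hμself i) ▸ dot_self_nonneg' _
  set T : Finset n := Finset.univ.filter (fun i => μ i ≠ 0) with hT
  have hsum : ∑ i, Real.sqrt (μ i) = ∑ i ∈ T, Real.sqrt (μ i) := by
    symm
    apply Finset.sum_filter_of_ne
    intro i _ h h0
    exact h (by rw [h0, Real.sqrt_zero])
  have hsqrt_ne : ∀ i ∈ T, Real.sqrt (μ i) ≠ 0 := by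
    intro i hi
    have hμi : μ i ≠ 0 := (Finset.mem_filter.mp hi).2
    exact fun h => hμi (by rw [← Real.mul_self_sqrt (hμ0 i), h, mul_zero])
  set u : n → p → ℝ := fun i => (Real.sqrt (μ i))⁻¹ • (W *ᵥ q i) with hu
  have huu : ∀ i ∈ T, ∀ j ∈ T, u i ⬝ᵥ u j = if i = j then 1 else 0 := by
    intro i hi j hj
    rw [hu]
    simp only [smul_dotProduct, dotProduct_smul, hWq i j, smul_eq_mul]
    by_cases h : i = j
    · subst h
      simp only [if_pos rfl]
      rw [← Real.mul_self_sqrt (hμ0 i)]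
      field_simp
      rw [if_pos trivial, if_pos trivial, Real.sqrt_sq (Real.sqrt_nonneg _)]
      exact div_self (pow_ne_zero 2 (hsqrt_ne i hi))
    · simp [h]
  have hval : ∀ i ∈ T, Real.sqrt (μ i) = u i ⬝ᵥ (W *ᵥ q i) := by
    intro i hi
    rw [hu]
    simp only [smul_dotProduct, hμself i, smul_eq_mul]
    rw [inv_mul_eq_div, eq_div_iff (hsqrt_ne i hi)]
    exact (Real.mul_self_sqrt (hμ0 i)).symm ▸ rfl
  have hexp : ∀ i, u i ⬝ᵥ (W *ᵥ q i) =
      ∑ j, s j * (((fun k => U k j) ⬝ᵥ u i) * ((fun k => V k j) ⬝ᵥ q i)) := by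
    intro i
    have hW1 : W *ᵥ q i = U *ᵥ (diagonal s *ᵥ (Vᵀ *ᵥ q i)) := by
      rw [hW, mulVec_mulVec, mulVec_mulVec]
    rw [hW1, dot_mulVec_left]
    simp only [dotProduct, mulVec, transpose_apply, diagonal_apply, ite_mul, zero_mul,
      Finset.sum_ite_eq, Finset.mem_univ, if_true]
    refine Finset.sum_congr rfl fun j _ => ?_
    ring
  have hUcol : ∀ j, (fun k => U k j) ⬝ᵥ (fun k => U k j) = 1 := by
    intro j
    have : (fun k => U k j) ⬝ᵥ (fun k => U k j) = (Uᵀ * U) j j := by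
      simp [mul_apply, dotProduct, transpose_apply]
    rw [this, hU, one_apply_eq]
  have hVcol : ∀ j, (fun k => V k j) ⬝ᵥ (fun k => V k j) = 1 := by
    intro j
    have : (fun k => V k j) ⬝ᵥ (fun k => V k j) = (Vᵀ * V) j j := by
      simp [mul_apply, dotProduct, transpose_apply]
    rw [this, hV, one_apply_eq]
  have hqT : ∀ i ∈ T, ∀ j ∈ T, q i ⬝ᵥ q j = if i = j then 1 else 0 := fun i _ j _ => hq i j
  rw [hsum]
  calc ∑ i ∈ T, Real.sqrt (μ i)
      = ∑ i ∈ T, ∑ j, s j * (((fun k => U k j) ⬝ᵥ u i) * ((fun k => V k j) ⬝ᵥ q i)) := by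
        refine Finset.sum_congr rfl fun i hi => ?_
        rw [hval i hi, hexp i]
    _ = ∑ j, s j * ∑ i ∈ T, ((fun k => U k j) ⬝ᵥ u i) * ((fun k => V k j) ⬝ᵥ q i) := by
        rw [Finset.sum_comm]
        exact Finset.sum_congr rfl fun j _ => by rw [Finset.mul_sum]
    _ ≤ ∑ j, s j * 1 := by
        refine Finset.sum_le_sum fun j _ => ?_
        refine mul_le_mul_of_nonneg_left ?_ (hs j)
        calc ∑ i ∈ T, ((fun k => U k j) ⬝ᵥ u i) * ((fun k => V k j) ⬝ᵥ q i)
            ≤ Real.sqrt (∑ i ∈ T, ((fun k => U k j) ⬝ᵥ u i) ^ 2) *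
              Real.sqrt (∑ i ∈ T, ((fun k => V k j) ⬝ᵥ q i) ^ 2) :=
              Real.sum_mul_le_sqrt_mul_sqrt T _ _
          _ ≤ Real.sqrt 1 * Real.sqrt 1 := by
              gcongr
              · exact (bessel T u huu _).trans_eq (hUcol j)
              · exact (bessel T q hqT _).trans_eq (hVcol j)
          _ = 1 := by rw [Real.sqrt_one, mul_one]
    _ = ∑ j, s j := by simp

end Upper

section Final

lemma frob_sq {p m : Type*} [Fintype p] [Fintype m] (A : Matrix p m ℝ) :
    frobNorm A ^ 2 = trace (Aᵀ * A) := by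
  rw [frobNorm, Real.sq_sqrt (by positivity)]
  simp only [trace, diag_apply, mul_apply, transpose_apply, pow_two]
  exact Finset.sum_comm

lemma trace_self_nonneg {p m : Type*} [Fintype p] [Fintype m] (A : Matrix p m ℝ) :
    0 ≤ trace (Aᵀ * A) := by
  simp only [trace, diag_apply, mul_apply, transpose_apply]
  exact Finset.sum_nonneg fun j _ => Finset.sum_nonneg fun i _ => mul_self_nonneg _

lemma trace_self_eq_zero {p m : Type*} [Fintype p] [Fintype m] (A : Matrix p m ℝ)
    (h : trace (Aᵀ * A) = 0) : A = 0 := by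
  simp only [trace, diag_apply, mul_apply, transpose_apply] at h
  ext i j
  have h1 := (Finset.sum_eq_zero_iff_of_nonneg
    (fun j _ => Finset.sum_nonneg fun i _ => mul_self_nonneg (A i j))).mp h j (Finset.mem_univ j)
  have h2 := (Finset.sum_eq_zero_iff_of_nonneg
    (fun i _ => mul_self_nonneg (A i j))).mp h1 i (Finset.mem_univ i)
  simpa [mul_self_eq_zero] using h2

end Final

/-- **Singular value soft-thresholding computes the nuclear-norm proximal operator.**
Let `λ > 0` and let `Y = U Σ Vᵀ` be a rank-`r` singular value decomposition
(`U ∈ ℝ^{m×r}`, `V ∈ ℝ^{n×r}` with orthonormal columns, `Σ = diag(σ₁ ≥ ⋯ ≥ σ_r > 0)`).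
Then `U diag((σᵢ − λ)₊) Vᵀ` is the unique minimizer of
`X ↦ (1/2)‖X − Y‖_F² + λ‖X‖_*`, i.e. it equals `prox_{λ‖·‖_*}(Y)`. -/
theorem prox_nuclearNorm_soft_thresholding
    {m n r : ℕ} (lam : ℝ) (hlam : 0 < lam)
    (Y : Matrix (Fin m) (Fin n) ℝ)
    (U : Matrix (Fin m) (Fin r) ℝ) (V : Matrix (Fin n) (Fin r) ℝ)
    (σ : Fin r → ℝ)
    (hU : Uᵀ * U = 1) (hV : Vᵀ * V = 1)
    (hσpos : ∀ i, 0 < σ i) (hσanti : Antitone σ)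
    (hY : Y = U * Matrix.diagonal σ * Vᵀ)
    (hrank : Y.rank = r) :
    (∀ X : Matrix (Fin m) (Fin n) ℝ,
      (1 / 2) * frobNorm (U * Matrix.diagonal (fun i => max (σ i - lam) 0) * Vᵀ - Y) ^ 2 +
          lam * nuclearNorm (U * Matrix.diagonal (fun i => max (σ i - lam) 0) * Vᵀ) ≤
        (1 / 2) * frobNorm (X - Y) ^ 2 + lam * nuclearNorm X) ∧
    (∀ X : Matrix (Fin m) (Fin n) ℝ,
      (∀ Z : Matrix (Fin m) (Fin n) ℝ,
        (1 / 2) * frobNorm (X - Y) ^ 2 + lam * nuclearNorm X ≤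
          (1 / 2) * frobNorm (Z - Y) ^ 2 + lam * nuclearNorm Z) →
      X = U * Matrix.diagonal (fun i => max (σ i - lam) 0) * Vᵀ) := by
  classical
  set s : Fin r → ℝ := fun i => max (σ i - lam) 0 with hsdef
  set W : Matrix (Fin m) (Fin n) ℝ := U * Matrix.diagonal s * Vᵀ with hWdef
  set d : Fin r → ℝ := fun i => min (σ i) lam / lam with hddef
  have hlam0 : lam ≠ 0 := ne_of_gt hlam
  have hs0 : ∀ i, 0 ≤ s i := fun i => le_max_right _ _
  have hd0 : ∀ i, 0 ≤ d i :=
    fun i => div_nonneg (le_min (hσpos i).le hlam.le) hlam.le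
  have hd1 : ∀ i, d i ≤ 1 := fun i => (div_le_one hlam).mpr (min_le_right _ _)
  set G : Matrix (Fin m) (Fin n) ℝ := U * Matrix.diagonal d * Vᵀ with hGdef
  have hGcontr : ∀ x : Fin n → ℝ, (G *ᵥ x) ⬝ᵥ (G *ᵥ x) ≤ x ⬝ᵥ x :=
    contraction U V d hU hV hd0 hd1
  have hNX : ∀ X : Matrix (Fin m) (Fin n) ℝ, trace (Gᵀ * X) ≤ nuclearNorm X := by
    intro X
    simpa [nuclearNorm] using trace_le_nuclearNorm' X G hGcontr
  have hds : ∀ i, d i * s i = s i := by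
    intro i
    rcases le_total (σ i) lam with h | h
    · have hz : s i = 0 := max_eq_right (by linarith)
      rw [hz, mul_zero]
    · have hmin : min (σ i) lam = lam := min_eq_right h
      have hd : d i = 1 := by rw [hddef]; simp [hmin, div_self hlam0]
      rw [hd, one_mul]
  have hGW : trace (Gᵀ * W) = ∑ i, s i := by
    rw [hGdef, hWdef, trace_UdVt U V d s hU hV]
    exact Finset.sum_congr rfl fun i _ => hds i
  have hNW : nuclearNorm W = ∑ i, s i := by
    refine le_antisymm ?_ ?_
    · simpa [nuclearNorm, hWdef] using nuclearNorm_UdVt_le U V s hU hV hs0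
    · calc ∑ i, s i = trace (Gᵀ * W) := hGW.symm
        _ ≤ nuclearNorm W := hNX W
  have hWY : W - Y = (-lam) • G := by
    rw [hY, hWdef, hGdef]
    have h1 : U * Matrix.diagonal s * Vᵀ - U * Matrix.diagonal σ * Vᵀ
        = U * Matrix.diagonal (fun i => s i - σ i) * Vᵀ := by
      rw [← Matrix.sub_mul, ← Matrix.mul_sub, diagonal_sub]
    have h2 : (fun i => s i - σ i) = fun i => (-lam) * d i := by
      funext i
      rcases le_total (σ i) lam with h | h
      · rw [hsdef, hddef]
        simp only
        rw [max_eq_right (by linarith), min_eq_left h]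
        field_simp
        try ring
      · rw [hsdef, hddef]
        simp only
        rw [max_eq_left (by linarith), min_eq_right h]
        field_simp
        try ring
    have h3 : Matrix.diagonal (fun i => (-lam) * d i) = (-lam) • Matrix.diagonal d := by
      rw [← diagonal_smul]
      rfl
    rw [h1, h2, h3, Matrix.mul_smul, Matrix.smul_mul]
  have key : ∀ X : Matrix (Fin m) (Fin n) ℝ,
      (1 / 2) * frobNorm (W - Y) ^ 2 + lam * nuclearNorm W
        + (1 / 2) * trace ((X - W)ᵀ * (X - W))
      ≤ (1 / 2) * frobNorm (X - Y) ^ 2 + lam * nuclearNorm X := by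
    intro X
    have hdec : X - Y = (X - W) + (W - Y) := by abel
    have e1 : frobNorm (X - Y) ^ 2 = trace ((X - W)ᵀ * (X - W))
        + 2 * trace ((W - Y)ᵀ * (X - W)) + frobNorm (W - Y) ^ 2 := by
      rw [frob_sq, frob_sq, hdec, transpose_add, Matrix.add_mul, Matrix.mul_add,
        Matrix.mul_add, trace_add, trace_add, trace_add]
      have hsym : trace ((X - W)ᵀ * (W - Y)) = trace ((W - Y)ᵀ * (X - W)) := by
        rw [← trace_transpose ((X - W)ᵀ * (W - Y)), transpose_mul, transpose_transpose]
      rw [hsym]; ring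
    have e2 : trace ((W - Y)ᵀ * (X - W)) = -lam * (trace (Gᵀ * X) - trace (Gᵀ * W)) := by
      rw [hWY, transpose_smul, Matrix.smul_mul, trace_smul, Matrix.mul_sub, trace_sub]
      simp only [smul_eq_mul]
      try ring
    have h1 := hNX X
    have h2 : lam * trace (Gᵀ * X) ≤ lam * nuclearNorm X :=
      mul_le_mul_of_nonneg_left h1 hlam.le
    rw [e1, e2, hGW, hNW]
    linarith
  constructor
  · intro X
    have hk := key X
    have h0 : 0 ≤ trace ((X - W)ᵀ * (X - W)) := trace_self_nonneg _
    linarith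
  · intro X hmin
    have h1 := key X
    have h2 := hmin W
    have h0 : trace ((X - W)ᵀ * (X - W)) ≤ 0 := by linarith
    have h3 : X - W = 0 :=
      trace_self_eq_zero _ (le_antisymm h0 (trace_self_nonneg _))
    exact sub_eq_zero.mp h3
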